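/- arXiv:2406.00141 — 4 statements merged into one kernel-verified Lean document; each statement's English description precedes it below -/
import Mathlib

section
/- For all homogeneous a₁, a₂ in an MDG R-algebra A and homogeneous x in an MDG A-module X, one has [a₁,a₂,x] = (-1)^{|a₁||a₂|}[a₂,a₁,x] + (-1)^{|a₂||x|}[a₁,x,a₂]. -/
/-- `(-1)^n` as an integer, for `n : ℤ`. -/
def sgn (n : ℤ) : ℤ := ((Int.negOnePow n : ℤˣ) : ℤ)

/-- An MDG `R`-algebra: a ℤ-graded `R`-complex `M` centered data, with a chain-map
multiplication which is unital and strictly graded-commutative, but not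
necessarily associative. -/
structure MDGAlg (R : Type*) (M : Type*) [CommRing R] [AddCommGroup M] [Module R M] where
  grading : ℤ → Submodule R M
  internal : DirectSum.IsInternal grading
  mul : M →ₗ[R] M →ₗ[R] M
  d : M →ₗ[R] M
  one : M
  one_mem : one ∈ grading 0
  mul_mem : ∀ {i j : ℤ} {a b : M}, a ∈ grading i → b ∈ grading j → mul a b ∈ grading (i + j)
  d_mem : ∀ {i : ℤ} {a : M}, a ∈ grading i → d a ∈ grading (i - 1)
  d_sq : ∀ a : M, d (d a) = 0
  one_mul : ∀ a : M, mul one a = a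
  mul_one : ∀ a : M, mul a one = a
  gcomm : ∀ {i j : ℤ} {a b : M}, a ∈ grading i → b ∈ grading j →
    mul a b = sgn (i * j) • mul b a
  odd_sq : ∀ {i : ℤ} {a : M}, Odd i → a ∈ grading i → mul a a = 0
  leibniz : ∀ {i : ℤ} {a : M}, a ∈ grading i → ∀ b : M,
    d (mul a b) = mul (d a) b + sgn i • mul a (d b)

/-- An MDG module over an MDG algebra: unital and graded-commutative, not
necessarily associative.  Both the left and the right `A`-scalar multiplication
are recorded; graded-commutativity ties them together. -/
structure MDGMod (R M X : Type*) [CommRing R] [AddCommGroup M] [Module R M]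
    [AddCommGroup X] [Module R X] (A : MDGAlg R M) where
  grading : ℤ → Submodule R X
  internal : DirectSum.IsInternal grading
  smul : M →ₗ[R] X →ₗ[R] X
  smulR : X →ₗ[R] M →ₗ[R] X
  d : X →ₗ[R] X
  smul_mem : ∀ {i j : ℤ} {a : M} {x : X}, a ∈ A.grading i → x ∈ grading j →
    smul a x ∈ grading (i + j)
  d_mem : ∀ {i : ℤ} {x : X}, x ∈ grading i → d x ∈ grading (i - 1)
  d_sq : ∀ x : X, d (d x) = 0
  one_smul : ∀ x : X, smul A.one x = x
  smul_one : ∀ x : X, smulR x A.one = x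
  gcomm : ∀ {i j : ℤ} {a : M} {x : X}, a ∈ A.grading i → x ∈ grading j →
    smul a x = sgn (i * j) • smulR x a
  leibniz : ∀ {i : ℤ} {a : M}, a ∈ A.grading i → ∀ x : X,
    d (smul a x) = smul (A.d a) x + sgn i • smul a (d x)

section Defs

variable {R M X Y : Type*} [CommRing R] [AddCommGroup M] [Module R M]
  [AddCommGroup X] [Module R X] [AddCommGroup Y] [Module R Y]

/-- The associator `[a,b,c] = (ab)c - a(bc)` of an MDG algebra. -/
def ascA (A : MDGAlg R M) (a b c : M) : M :=
  A.mul (A.mul a b) c - A.mul a (A.mul b c)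

/-- The associator `[a,b,x] = (ab)x - a(bx)` of an MDG module. -/
def ascAAX {A : MDGAlg R M} (Xm : MDGMod R M X A) (a b : M) (x : X) : X :=
  Xm.smul (A.mul a b) x - Xm.smul a (Xm.smul b x)

/-- The associator `[x,a,b] = (xa)b - x(ab)`. -/
def ascXAA {A : MDGAlg R M} (Xm : MDGMod R M X A) (x : X) (a b : M) : X :=
  Xm.smulR (Xm.smulR x a) b - Xm.smulR x (A.mul a b)

/-- The associator `[a,x,b] = (ax)b - a(xb)`. -/
def ascAXA {A : MDGAlg R M} (Xm : MDGMod R M X A) (a : M) (x : X) (b : M) : X :=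
  Xm.smulR (Xm.smul a x) b - Xm.smul a (Xm.smulR x b)

/-- The multiplicator `[a,x]_φ = φ(ax) - aφ(x)` of a chain map `φ : X → Y`. -/
def multc {A : MDGAlg R M} (Xm : MDGMod R M X A) (Ym : MDGMod R M Y A)
    (φ : X →ₗ[R] Y) (a : M) (x : X) : Y :=
  φ (Xm.smul a x) - Ym.smul a (φ x)

/-- The right-sided multiplicator `[x,a]_φ = φ(xa) - φ(x)a`. -/
def multcR {A : MDGAlg R M} (Xm : MDGMod R M X A) (Ym : MDGMod R M Y A)
    (φ : X →ₗ[R] Y) (x : X) (a : M) : Y :=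
  φ (Xm.smulR x a) - Ym.smulR (φ x) a

/-- The associator `A`-submodule `⟨X⟩`: the smallest submodule of `X` containing
all associators and closed under the `A`-action and the differential. -/
def assocSub {A : MDGAlg R M} (Xm : MDGMod R M X A) : Submodule R X :=
  sInf {S : Submodule R X |
    (∀ (a : M) (x : X), x ∈ S → Xm.smul a x ∈ S) ∧
    (∀ x ∈ S, Xm.d x ∈ S) ∧
    ∀ (a b : M) (x : X), ascAAX Xm a b x ∈ S}

/-- The associator ideal `⟨A⟩` of an MDG algebra. -/
def assocIdeal (A : MDGAlg R M) : Submodule R M :=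
  sInf {S : Submodule R M |
    (∀ (a : M) (x : M), x ∈ S → A.mul a x ∈ S) ∧
    (∀ x ∈ S, A.d x ∈ S) ∧
    ∀ a b c : M, ascA A a b c ∈ S}

end Defs

/-- `[a₁,a₂,x] = (-1)^{|a₁||a₂|}[a₂,a₁,x] + (-1)^{|a₂||x|}[a₁,x,a₂]`. -/
theorem stmt3 {R M X : Type*} [CommRing R] [AddCommGroup M] [Module R M]
    [AddCommGroup X] [Module R X] (A : MDGAlg R M) (Xm : MDGMod R M X A)
    {i j k : ℤ} {a₁ a₂ : M} {x : X}
    (h₁ : a₁ ∈ A.grading i) (h₂ : a₂ ∈ A.grading j) (hx : x ∈ Xm.grading k) :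
    ascAAX Xm a₁ a₂ x =
      sgn (i * j) • ascAAX Xm a₂ a₁ x + sgn (j * k) • ascAXA Xm a₁ x a₂ := by
  have e1 : Xm.smul (A.mul a₁ a₂) x = sgn (i * j) • Xm.smul (A.mul a₂ a₁) x := by
    rw [A.gcomm h₁ h₂, map_zsmul, LinearMap.smul_apply]
  have e2 : Xm.smul a₁ (Xm.smul a₂ x) = sgn (j * k) • Xm.smul a₁ (Xm.smulR x a₂) := by
    rw [Xm.gcomm h₂ hx, map_zsmul]
  have e3 : Xm.smul a₂ (Xm.smul a₁ x)
      = sgn (j * (i + k)) • Xm.smulR (Xm.smul a₁ x) a₂ :=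
    Xm.gcomm h₂ (Xm.smul_mem h₁ hx)
  have hkey : sgn (i * j) * sgn (j * (i + k)) = sgn (j * k) := by
    unfold sgn
    rw [← Units.val_mul, ← Int.negOnePow_add]
    congr 1
    have : i * j + j * (i + k) = 2 * (i * j) + j * k := by ring
    rw [this, Int.negOnePow_add, Int.negOnePow_two_mul, one_mul]
  unfold ascAAX ascAXA
  rw [e1, e2, e3, smul_sub, smul_sub, smul_smul, hkey]
  abel
end

section
/- Let a be a homogeneous element of an MDG R-algebra A and x a homogeneous element of an MDG A-module X. If |a| is even then [a,x,a] = 0, and if |a| is odd then [a,x,a] = (-1)^{|x|}·2·[a,a,x]. In particular, if [a,a,x] = 0 then [a,x,a] = 0, and the converse holds when |a| is odd and 2 is invertible (or more generally char R ≠ 2). -/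
/-- If `|a|` is even then `[a,x,a] = 0`; if `|a|` is odd then
`[a,x,a] = (-1)^{|x|}·2·[a,a,x]`.  In particular `[a,a,x] = 0 → [a,x,a] = 0`,
and the converse holds when `|a|` is odd and `2` is invertible. -/
theorem stmt6 {R M X : Type*} [CommRing R] [AddCommGroup M] [Module R M]
    [AddCommGroup X] [Module R X] (A : MDGAlg R M) (Xm : MDGMod R M X A)
    {i j : ℤ} {a : M} {x : X}
    (ha : a ∈ A.grading i) (hx : x ∈ Xm.grading j) :
    (Even i → ascAXA Xm a x a = 0) ∧
    (Odd i → ascAXA Xm a x a = sgn j • ((2 : ℤ) • ascAAX Xm a a x)) ∧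
    (ascAAX Xm a a x = 0 → ascAXA Xm a x a = 0) ∧
    (Odd i → IsUnit (2 : R) → ascAXA Xm a x a = 0 → ascAAX Xm a a x = 0) := by
  have sgn_sq : ∀ n : ℤ, sgn n * sgn n = 1 := by
    intro n
    unfold sgn
    rw [← Units.val_mul, ← Int.negOnePow_add]
    rw [Int.negOnePow_even _ ⟨n, rfl⟩]
    rfl
  have sgn_add : ∀ m n : ℤ, sgn (m + n) = sgn m * sgn n := by
    intro m n; unfold sgn; rw [← Units.val_mul, Int.negOnePow_add]
  have sgn_even : ∀ n : ℤ, Even n → sgn n = 1 := by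
    intro n hn; unfold sgn; rw [Int.negOnePow_even _ hn]; rfl
  have sgn_odd : ∀ n : ℤ, Odd n → sgn n = -1 := by
    intro n hn; unfold sgn; rw [Int.negOnePow_odd _ hn]; rfl
  have e1 : Xm.smulR (Xm.smul a x) a = sgn (i * (i + j)) • Xm.smul a (Xm.smul a x) := by
    rw [Xm.gcomm ha (Xm.smul_mem ha hx), smul_smul, sgn_sq, one_smul]
  have e2 : Xm.smulR x a = sgn (i * j) • Xm.smul a x := by
    rw [Xm.gcomm ha hx, smul_smul, sgn_sq, one_smul]
  have main : ascAXA Xm a x a = (sgn (i * (i + j)) - sgn (i * j)) • Xm.smul a (Xm.smul a x) := by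
    unfold ascAXA
    rw [e1, e2, map_zsmul, sub_smul]
  have heven : Even i → ascAXA Xm a x a = 0 := by
    intro hi
    rw [main, mul_add, sgn_add, sgn_even _ (hi.mul_right i), one_mul, sub_self,
      zero_smul]
  have hodd : Odd i → ascAXA Xm a x a = sgn j • ((2 : ℤ) • ascAAX Xm a a x) := by
    intro hi
    have hij : sgn (i * j) = sgn j := by
      have : i * j = (i - 1) * j + j := by ring
      rw [this, sgn_add, sgn_even _ ((hi.sub_odd odd_one).mul_right j), one_mul]
    have haax : ascAAX Xm a a x = -(Xm.smul a (Xm.smul a x)) := by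
      unfold ascAAX
      rw [A.odd_sq hi ha, map_zero, LinearMap.zero_apply, zero_sub]
    rw [main, haax, mul_add, sgn_add, sgn_odd _ (hi.mul hi), hij]
    module
  refine ⟨heven, hodd, ?_, ?_⟩
  · intro h0
    rcases Int.even_or_odd i with hi | hi
    · exact heven hi
    · rw [hodd hi, h0, smul_zero, smul_zero]
  · intro hi hu h0
    have h2 : (2 : ℤ) • ascAAX Xm a a x = 0 := by
      have := (hodd hi).symm.trans h0
      have h3 : (sgn j * (sgn j * 2)) • ascAAX Xm a a x = 0 := by
        simpa [smul_smul] using congrArg (fun z => sgn j • z) this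
      rwa [← mul_assoc, sgn_sq, one_mul] at h3
    have h2' : (2 : R) • ascAAX Xm a a x = 0 := by
      rw [← Int.cast_smul_eq_zsmul R] at h2
      simpa using h2
    have := congrArg (fun z => hu.unit⁻¹ • z) h2'
    simpa [smul_smul, Units.smul_def, ← Units.val_mul] using this
end

section
/- If A is an alternative MDG R-algebra (meaning [a,a,b] = 0 for all a, b in A), then [a₁,a₂,a₃] = 0 for all homogeneous a₁, a₂, a₃ with |a₁| and |a₃| odd. -/
lemma sgn_odd {n : ℤ} (h : Odd n) : sgn n = -1 := by
  unfold sgn; rw [Int.negOnePow_odd _ h]; rfl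

lemma sgn_add (m n : ℤ) : sgn (m + n) = sgn m * sgn n := by
  unfold sgn; rw [Int.negOnePow_add]; push_cast; ring

/-- In an alternative MDG algebra, `[a₁,a₂,a₃] = 0` whenever `|a₁|` and `|a₃|`
are odd. -/
theorem stmt7 {R M : Type*} [CommRing R] [AddCommGroup M] [Module R M]
    (A : MDGAlg R M) (halt : ∀ a b : M, ascA A a a b = 0)
    {i j k : ℤ} {a₁ a₂ a₃ : M}
    (h₁ : a₁ ∈ A.grading i) (h₂ : a₂ ∈ A.grading j) (h₃ : a₃ ∈ A.grading k)
    (hi : Odd i) (hk : Odd k) :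
    ascA A a₁ a₂ a₃ = 0 := by
  have hki : Odd (k * i) := Int.odd_mul.mpr ⟨hk, hi⟩
  have h31 : A.mul a₃ a₁ = - A.mul a₁ a₃ := by
    rw [A.gcomm h₃ h₁, sgn_odd hki, neg_smul, one_smul]
  have e1 := halt a₁ a₂
  have e3 := halt a₃ a₂
  have pol := halt (a₁ + a₃) a₂
  unfold ascA at e1 e3 pol ⊢
  rw [sub_eq_zero] at e1 e3
  simp only [map_add, LinearMap.add_apply, h31, map_neg, LinearMap.neg_apply,
    e1, e3] at pol
  have pol' : A.mul a₁ (A.mul a₃ a₂) + A.mul a₃ (A.mul a₁ a₂) = 0 := by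
    abel_nf at pol ⊢
    simpa only [neg_smul, one_smul, ← neg_add, neg_eq_zero, add_comm] using pol
  have pol'' : A.mul a₁ (A.mul a₃ a₂) = - A.mul a₃ (A.mul a₁ a₂) :=
    eq_neg_of_add_eq_zero_left pol'
  have hodd : Odd (j * k + k * (i + j)) := by
    have h2 : j * k + k * (i + j) = 2 * (j * k) + k * i := by ring
    rw [h2]
    exact (Even.add_odd ⟨j * k, by ring⟩ hki)
  rw [A.gcomm h₂ h₃, map_zsmul, pol'', A.gcomm h₃ (A.mul_mem h₁ h₂),
    smul_neg, smul_smul, ← sgn_add, sgn_odd hodd, neg_smul, one_smul, neg_neg,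
    sub_self]
end

section
/- Let (R,m) be a local ring, A an MDG R-algebra, X an MDG A-module such that the associator submodule ⟨X⟩ is minimal (d⟨X⟩ ⊆ m⟨X⟩) with each ⟨X⟩ᵢ a finitely generated R-module. If ⟨X⟩ᵢ = 0 and H_{i+1}(⟨X⟩) = 0, then ⟨X⟩_{i+1} = 0. -/
section AuxProof

variable {R M X : Type*} [CommRing R] [AddCommGroup M] [Module R M]
  [AddCommGroup X] [Module R X]

theorem assocSub_d_mem {A : MDGAlg R M} (Xm : MDGMod R M X A) {x : X}
    (hx : x ∈ assocSub Xm) : Xm.d x ∈ assocSub Xm := by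
  rw [assocSub, Submodule.mem_sInf] at hx ⊢
  exact fun S hS => hS.2.1 x (hx S hS)

theorem mem_of_mem_iSup_of_mem_grading {A : MDGAlg R M} (Xm : MDGMod R M X A)
    (P : ℤ → Submodule R X) (hP : ∀ n, P n ≤ Xm.grading n) (j : ℤ) {x : X}
    (hx : x ∈ ⨆ n, P n) (hxj : x ∈ Xm.grading j) : x ∈ P j := by
  classical
  set e := LinearEquiv.ofBijective (DirectSum.coeLinearMap Xm.grading) Xm.internal with he
  set π : X →ₗ[R] X :=
    (Xm.grading j).subtype.comp
      ((DirectSum.component R ℤ (fun n => Xm.grading n) j).comp e.symm.toLinearMap) with hπ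
  have hπ_mem : ∀ {n : ℤ} {y : X}, y ∈ Xm.grading n → π y = if n = j then y else 0 := by
    intro n y hy
    by_cases h : n = j
    · subst h
      simp only [hπ, LinearMap.comp_apply, LinearEquiv.coe_toLinearMap,
        ← DirectSum.apply_eq_component]
      rw [Xm.internal.ofBijective_coeLinearMap_of_mem hy]
      simp
    · simp only [hπ, LinearMap.comp_apply, LinearEquiv.coe_toLinearMap,
        ← DirectSum.apply_eq_component]
      rw [Xm.internal.ofBijective_coeLinearMap_of_mem_ne h hy]
      simp [h]
  have hmap : Submodule.map π (⨆ n, P n) ≤ P j := by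
    rw [Submodule.map_iSup]
    apply iSup_le
    intro n
    rintro _ ⟨y, hy, rfl⟩
    rw [hπ_mem (hP n hy)]
    split
    · next h => subst h; exact hy
    · exact (P j).zero_mem
  have : π x = x := by rw [hπ_mem hxj]; simp
  rw [← this]
  exact hmap ⟨x, hx, rfl⟩

end AuxProof

/-- Over a local ring, if the associator submodule `⟨X⟩` is a minimal graded
complex with finitely generated graded pieces, vanishes in degree `i`, and its
homology vanishes in degree `i+1`, then `⟨X⟩` vanishes in degree `i+1`. -/
theorem stmt10 {R M X : Type*} [CommRing R] [IsLocalRing R]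
    [AddCommGroup M] [Module R M] [AddCommGroup X] [Module R X]
    (A : MDGAlg R M) (Xm : MDGMod R M X A) (i : ℤ)
    (hgraded : assocSub Xm = ⨆ n : ℤ, assocSub Xm ⊓ Xm.grading n)
    (hmin : ∀ x ∈ assocSub Xm,
      Xm.d x ∈ (IsLocalRing.maximalIdeal R) • assocSub Xm)
    (hfg : ∀ n : ℤ, (assocSub Xm ⊓ Xm.grading n).FG)
    (hzero : assocSub Xm ⊓ Xm.grading i = ⊥)
    (hhomology : ∀ x ∈ assocSub Xm ⊓ Xm.grading (i + 1), Xm.d x = 0 →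
      ∃ y ∈ assocSub Xm ⊓ Xm.grading (i + 2), Xm.d y = x) :
    assocSub Xm ⊓ Xm.grading (i + 1) = ⊥ := by
  set N := assocSub Xm ⊓ Xm.grading (i + 1) with hN
  have key : N ≤ (IsLocalRing.maximalIdeal R) • N := by
    intro x hx
    obtain ⟨hxA, hxg⟩ := hx
    have hdx : Xm.d x = 0 := by
      have h1 : Xm.d x ∈ assocSub Xm ⊓ Xm.grading i := by
        refine ⟨assocSub_d_mem Xm hxA, ?_⟩
        have := Xm.d_mem hxg
        simpa using this
      rw [hzero] at h1
      exact h1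
    obtain ⟨y, hy, hdy⟩ := hhomology x ⟨hxA, hxg⟩ hdx
    have hxm : x ∈ (IsLocalRing.maximalIdeal R) • assocSub Xm := by
      rw [← hdy]; exact hmin y hy.1
    rw [hgraded, Submodule.smul_iSup] at hxm
    exact mem_of_mem_iSup_of_mem_grading Xm
      (fun n => (IsLocalRing.maximalIdeal R) • (assocSub Xm ⊓ Xm.grading n))
      (fun n => (Submodule.smul_le_right).trans inf_le_right) (i + 1) hxm hxg
  exact Submodule.eq_bot_of_le_smul_of_le_jacobson_bot _ N (hfg (i+1)) key
    (IsLocalRing.maximalIdeal_le_jacobson ⊥)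
end
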